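/- Let μ be a CM probability measure on ℤ with representing measure ν. If there exists L > 0 such that ∫₀ˣ t/(1−t)² ν(dt) ≤ (L/(1−x)) ∫ₓ¹ t/(1−t) ν(dt) for all x ∈ [0,1), then there exists K > 0 such that |Im μ̂(θ)| ≤ K (1 − Re μ̂(θ)) for all θ ∈ [−π, π]. -/

import Mathlib

open MeasureTheory Set
open scoped ENNReal NNReal

noncomputable def zfun (θ t : ℝ) : ℂ := (1 - (t:ℂ) * Complex.exp (Complex.I * θ))⁻¹

noncomputable def Dfun (θ t : ℝ) : ℝ := 1 - 2*t*Real.cos θ + t^2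

section Estimates


lemma Dpos (θ : ℝ) {t : ℝ} (h0 : 0 ≤ t) (h1 : t < 1) : 0 < Dfun θ t := by
  have := Real.cos_le_one θ
  have := Real.neg_one_le_cos θ
  unfold Dfun; nlinarith

lemma cos_lb {θ : ℝ} (hθ : |θ| ≤ Real.pi) : θ^2/5 ≤ 1 - Real.cos θ := by
  have h := Real.cos_le_one_sub_mul_cos_sq hθ
  have hπ := Real.pi_lt_d2
  have hπ0 := Real.pi_gt_three
  have hp2 : 0 < Real.pi^2 := by positivity
  have h25 : (1:ℝ)/5 ≤ 2/Real.pi^2 := by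
    rw [div_le_div_iff₀ (by norm_num) hp2]; nlinarith
  have h2 : θ^2/5 ≤ 2 / Real.pi ^ 2 * θ^2 := by
    rw [div_eq_mul_inv, mul_comm]
    exact mul_le_mul_of_nonneg_right (by simpa using h25) (sq_nonneg θ)
  linarith

lemma identity (θ : ℝ) {t : ℝ} (h0 : 0 ≤ t) (h1 : t < 1) :
    (1-t)⁻¹ - (1 - t*Real.cos θ)/Dfun θ t
      = t*(1+t)*(1-Real.cos θ)/((1-t)*Dfun θ t) := by
  have hD := (Dpos θ h0 h1).ne'
  have h1t : (1:ℝ) - t ≠ 0 := by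
    intro h; rw [sub_eq_zero] at h; exact absurd h.symm h1.ne
  unfold Dfun at *
  rw [inv_eq_one_div, div_sub_div _ _ h1t hD]; congr 1; ring

lemma gnonneg (θ : ℝ) {t : ℝ} (h0 : 0 ≤ t) (h1 : t < 1) :
    0 ≤ t*(1+t)*(1-Real.cos θ)/((1-t)*Dfun θ t) := by
  have hD := Dpos θ h0 h1
  have := Real.cos_le_one θ
  exact div_nonneg (mul_nonneg (mul_nonneg h0 (by linarith)) (by linarith))
    (mul_nonneg (by linarith) hD.le)

lemma estE1 (θ : ℝ) {t x : ℝ} (h0 : 0 ≤ t) (hx : t ≤ x) (h1 : x < 1) :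
    t*|Real.sin θ|/Dfun θ t ≤ |θ| * (t/(1-t)^2) := by
  have h1t : t < 1 := lt_of_le_of_lt hx h1
  have hD := Dpos θ h0 h1t
  have hs : |Real.sin θ| ≤ |θ| := Real.abs_sin_le_abs
  have hub : (1-t)^2 ≤ Dfun θ t := by
    have := Real.cos_le_one θ
    unfold Dfun; nlinarith
  rw [mul_div_assoc' |θ|]
  apply div_le_div₀ (by positivity)
    (by nlinarith [abs_nonneg (Real.sin θ), abs_nonneg θ]) (by nlinarith) hub

lemma estE2 (θ : ℝ) {t : ℝ} (h0 : 1/2 ≤ t) (h1 : t < 1) :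
    t*|Real.sin θ|/Dfun θ t ≤ t/(1-t) := by
  have hD := Dpos θ (by linarith) h1
  rw [div_le_div_iff₀ hD (by linarith)]
  have hkey : |Real.sin θ| * (1-t) ≤ Dfun θ t := by
    unfold Dfun
    nlinarith [sq_nonneg (1 - t - |Real.sin θ|), sq_abs (Real.sin θ),
      Real.sin_sq_add_cos_sq θ, Real.cos_le_one θ, Real.neg_one_le_cos θ,
      sq_nonneg (1 - Real.cos θ), abs_nonneg (Real.sin θ)]
  nlinarith [abs_nonneg (Real.sin θ)]

lemma estE3 {θ t : ℝ} (hθ : |θ| ≤ Real.pi) (hθ2 : |θ| ≤ 1/2) (ht : 1 - |θ| ≤ t) (h1 : t < 1) :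
    t/((1-t)*10) ≤ t*(1+t)*(1-Real.cos θ)/((1-t)*Dfun θ t) := by
  have h0 : (0:ℝ) ≤ t := by
    have := abs_nonneg θ; linarith
  have hD := Dpos θ h0 h1
  rw [div_le_div_iff₀ (by nlinarith) (by nlinarith)]
  have hc := cos_lb hθ
  have hc1 := Real.cos_le_one θ
  have hsq : (1-t)^2 ≤ θ^2 := by
    rw [← sq_abs θ]
    apply pow_le_pow_left₀ (by linarith) (by linarith)
  have hkey : Dfun θ t ≤ 10*(1+t)*(1-Real.cos θ) := by
    unfold Dfun; nlinarith
  unfold Dfun at *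
  nlinarith [mul_nonneg h0 (sub_nonneg.2 h1.le), sq_nonneg (1-t)]

lemma estE4 {θ t : ℝ} (hθl : 1/2 ≤ |θ|) (hθ : |θ| ≤ Real.pi) (h0 : 0 ≤ t) (h1 : t < 1) :
    t*|Real.sin θ|/Dfun θ t ≤ 20 * (t*(1+t)*(1-Real.cos θ)/((1-t)*Dfun θ t)) := by
  have hD := Dpos θ h0 h1
  have hc := cos_lb hθ
  have hc' : 1/20 ≤ 1 - Real.cos θ := by nlinarith [sq_abs θ]
  have hs : |Real.sin θ| ≤ 1 := Real.abs_sin_le_one θ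
  rw [mul_div_assoc' 20, div_le_div_iff₀ hD (mul_pos (by linarith) hD)]
  have hkey : |Real.sin θ| * (1-t) ≤ 20*((1+t)*(1-Real.cos θ)) := by nlinarith
  nlinarith [mul_le_mul_of_nonneg_right hkey (mul_nonneg h0 hD.le)]

end Estimates

section Pointwise



lemma wre (θ t : ℝ) : ((1:ℂ) - (t:ℂ) * Complex.exp (Complex.I * θ)).re = 1 - t * Real.cos θ := by
  rw [mul_comm Complex.I, Complex.exp_mul_I]
  simp [Complex.cos_ofReal_re, Complex.sin_ofReal_re]

lemma wim (θ t : ℝ) : ((1:ℂ) - (t:ℂ) * Complex.exp (Complex.I * θ)).im = -(t * Real.sin θ) := by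
  rw [mul_comm Complex.I, Complex.exp_mul_I]
  simp [Complex.cos_ofReal_im, Complex.sin_ofReal_im, Complex.sin_ofReal_re]

lemma wnormSq (θ t : ℝ) : Complex.normSq ((1:ℂ) - (t:ℂ) * Complex.exp (Complex.I * θ)) = Dfun θ t := by
  rw [Complex.normSq_apply, wre, wim, Dfun]
  nlinarith [Real.sin_sq_add_cos_sq θ]

lemma zre (θ : ℝ) {t : ℝ} : (zfun θ t).re = (1 - t * Real.cos θ) / Dfun θ t := by
  rw [zfun, Complex.inv_re, wre, wnormSq]

lemma zim (θ : ℝ) {t : ℝ} : (zfun θ t).im = t * Real.sin θ / Dfun θ t := by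
  rw [zfun, Complex.inv_im, wim, wnormSq]; ring

lemma wnorm_ge (θ : ℝ) {t : ℝ} (h0 : 0 ≤ t) :
    1 - t ≤ ‖(1:ℂ) - (t:ℂ) * Complex.exp (Complex.I * θ)‖ := by
  have h1 : ‖(t:ℂ) * Complex.exp (Complex.I * θ)‖ = t := by
    rw [norm_mul, mul_comm Complex.I,
      Complex.norm_exp_ofReal_mul_I]
    simp [abs_of_nonneg h0]
  calc 1 - t = ‖(1:ℂ)‖ - ‖(t:ℂ) * Complex.exp (Complex.I * θ)‖ := by rw [h1]; simp
  _ ≤ _ := norm_sub_norm_le _ _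

lemma znorm_le (θ : ℝ) {t : ℝ} (h0 : 0 ≤ t) (h1 : t < 1) : ‖zfun θ t‖ ≤ (1 - t)⁻¹ := by
  rw [zfun, norm_inv]
  exact inv_anti₀ (by linarith) (wnorm_ge θ h0)

lemma tsum_z (θ : ℝ) {t : ℝ} (h0 : 0 ≤ t) (h1 : t < 1) :
    ∑' n : ℕ, ((t ^ n : ℝ) : ℂ) * Complex.exp (Complex.I * n * θ) = zfun θ t := by
  have hn : ∀ n : ℕ, ((t ^ n : ℝ) : ℂ) * Complex.exp (Complex.I * n * θ)
      = ((t:ℂ) * Complex.exp (Complex.I * θ)) ^ n := by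
    intro n
    rw [mul_pow, ← Complex.exp_nat_mul]
    push_cast
    ring_nf
  simp_rw [hn]
  apply tsum_geometric_of_norm_lt_one
  rw [norm_mul, mul_comm Complex.I,
    Complex.norm_exp_ofReal_mul_I]
  simp [abs_of_nonneg h0]; linarith

end Pointwise

section Repr



lemma ae_mem_lt (ν : Measure ℝ) (hone : ν {1} = 0) :
    ∀ᵐ t ∂(ν.restrict (Icc (0:ℝ) 1)), 0 ≤ t ∧ t < 1 := by
  have h1 : ∀ᵐ t ∂(ν.restrict (Icc (0:ℝ) 1)), t ∈ Icc (0:ℝ) 1 :=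
    ae_restrict_mem measurableSet_Icc
  have h2 : ∀ᵐ t ∂(ν.restrict (Icc (0:ℝ) 1)), t ≠ 1 := by
    refine ae_restrict_of_ae ?_
    rw [ae_iff]
    convert hone using 2
    ext t; simp
  filter_upwards [h1, h2] with t ht hne
  exact ⟨ht.1, lt_of_le_of_ne ht.2 hne⟩

lemma norm_exp_I_mul (θ : ℝ) (n : ℕ) : ‖Complex.exp (Complex.I * n * θ)‖ = 1 := by
  rw [show Complex.I * (n:ℂ) * (θ:ℝ) = (((n:ℝ)*θ : ℝ):ℂ) * Complex.I by push_cast; ring,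
    Complex.norm_exp_ofReal_mul_I]

lemma nnnorm_f (θ t : ℝ) (h0 : 0 ≤ t) (n : ℕ) :
    (‖((t ^ n : ℝ) : ℂ) * Complex.exp (Complex.I * n * θ)‖₊ : ℝ≥0∞)
      = (ENNReal.ofReal t) ^ n := by
  have : ‖((t ^ n : ℝ) : ℂ) * Complex.exp (Complex.I * n * θ)‖ = t ^ n := by
    rw [norm_mul, norm_exp_I_mul, mul_one, Complex.norm_real, Real.norm_eq_abs,
      abs_of_nonneg (by positivity)]
  rw [← enorm_eq_nnnorm, ← ofReal_norm, this, ENNReal.ofReal_pow h0]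

lemma repr_lemma (ν : Measure ℝ) [IsFiniteMeasure ν] (hone : ν {1} = 0)
    (hint : IntegrableOn (fun t : ℝ => (1 - t)⁻¹) (Icc 0 1) ν) (θ : ℝ) :
    ∑' n : ℕ, ((∫ t in Icc (0:ℝ) 1, t ^ n ∂ν : ℝ) : ℂ) * Complex.exp (Complex.I * n * θ)
      = ∫ t in Icc (0:ℝ) 1, zfun θ t ∂ν := by
  have hae := ae_mem_lt ν hone
  set f : ℕ → ℝ → ℂ := fun n t => ((t ^ n : ℝ) : ℂ) * Complex.exp (Complex.I * n * θ) with hf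
  have hmeas : ∀ n, AEStronglyMeasurable (f n) (ν.restrict (Icc (0:ℝ) 1)) := fun n =>
    ((Complex.continuous_ofReal.comp (continuous_pow n)).mul continuous_const).aestronglyMeasurable
  have hfin : ∫⁻ t, ENNReal.ofReal ((1 - t)⁻¹) ∂(ν.restrict (Icc (0:ℝ) 1)) < ⊤ := by
    have h2 := hint.2
    rw [hasFiniteIntegral_iff_norm] at h2
    refine lt_of_le_of_lt (lintegral_mono fun t => ?_) h2
    exact ENNReal.ofReal_le_ofReal (le_abs_self _)
  have hsum : ∑' n, ∫⁻ t, ‖f n t‖₊ ∂(ν.restrict (Icc (0:ℝ) 1)) ≠ ⊤ := by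
    have heq : ∑' n, ∫⁻ t, ‖f n t‖₊ ∂(ν.restrict (Icc (0:ℝ) 1))
        = ∫⁻ t, ∑' n, (‖f n t‖₊ : ℝ≥0∞) ∂(ν.restrict (Icc (0:ℝ) 1)) := by
      rw [lintegral_tsum (f := fun n t => (‖f n t‖₊ : ℝ≥0∞)) fun n => (hmeas n).enorm]
    rw [heq]
    have hle : ∫⁻ t, ∑' n, (‖f n t‖₊ : ℝ≥0∞) ∂(ν.restrict (Icc (0:ℝ) 1))
        ≤ ∫⁻ t, ENNReal.ofReal ((1 - t)⁻¹) ∂(ν.restrict (Icc (0:ℝ) 1)) := by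
      apply lintegral_mono_ae
      filter_upwards [hae] with t ht
      obtain ⟨h0, h1⟩ := ht
      have hgeom : ∑' n, (‖f n t‖₊ : ℝ≥0∞) = (1 - ENNReal.ofReal t)⁻¹ := by
        simp_rw [hf, nnnorm_f θ t h0]
        exact ENNReal.tsum_geometric _
      rw [hgeom, ← ENNReal.ofReal_one, ← ENNReal.ofReal_sub _ h0,
        ENNReal.ofReal_inv_of_pos (by linarith)]
    exact (lt_of_le_of_lt hle hfin).ne
  have hswap := integral_tsum hmeas hsum
  calc ∑' n : ℕ, ((∫ t in Icc (0:ℝ) 1, t ^ n ∂ν : ℝ) : ℂ) * Complex.exp (Complex.I * n * θ)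
      = ∑' n : ℕ, ∫ t in Icc (0:ℝ) 1, f n t ∂ν := by
        congr 1; funext n
        rw [← Complex.real_smul, ← integral_smul_const]
        apply integral_congr_ae
        filter_upwards with t
        rw [hf, Complex.real_smul]
    _ = ∫ t in Icc (0:ℝ) 1, ∑' n, f n t ∂ν := hswap.symm
    _ = ∫ t in Icc (0:ℝ) 1, zfun θ t ∂ν := by
        apply integral_congr_ae
        filter_upwards [hae] with t ht
        exact tsum_z θ ht.1 ht.2

end Repr

/-- For a CM probability measure on `ℤ`, the integral condition on the
representing measure `ν` implies the bounded angular ratio property. -/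
theorem cm_bar_of_integral_condition (ν : Measure ℝ) [IsFiniteMeasure ν]
    (hsupp : ν (Icc (0 : ℝ) 1)ᶜ = 0) (hone : ν {1} = 0)
    (hint : IntegrableOn (fun t : ℝ => (1 - t)⁻¹) (Icc 0 1) ν)
    (hprob : ∫ t in Icc (0 : ℝ) 1, (1 - t)⁻¹ ∂ν = 1)
    (μhat : ℝ → ℂ)
    (hμhat : ∀ θ : ℝ, μhat θ =
      ∑' n : ℕ, ((∫ t in Icc (0 : ℝ) 1, t ^ n ∂ν : ℝ) : ℂ) *
        Complex.exp (Complex.I * n * θ))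
    (L : ℝ) (hL : 0 < L)
    (hcond : ∀ x ∈ Ico (0 : ℝ) 1,
      ∫ t in Icc (0 : ℝ) x, t / (1 - t) ^ 2 ∂ν ≤
        (L / (1 - x)) * ∫ t in Icc x 1, t / (1 - t) ∂ν) :
    ∃ K : ℝ, 0 < K ∧ ∀ θ ∈ Icc (-Real.pi) Real.pi,
      |(μhat θ).im| ≤ K * (1 - (μhat θ).re) := by
  refine ⟨20 + 10*(L+1), by linarith, ?_⟩
  intro θ hθ
  have hθabs : |θ| ≤ Real.pi := abs_le.mpr ⟨hθ.1, hθ.2⟩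
  have hae := ae_mem_lt ν hone
  -- integrability of zfun
  have hz_meas : Measurable (zfun θ) := by
    unfold zfun
    exact (measurable_const.sub (Complex.measurable_ofReal.mul_const _)).inv
  have hz_int : IntegrableOn (zfun θ) (Icc 0 1) ν := by
    apply Integrable.mono' hint hz_meas.aestronglyMeasurable
    filter_upwards [hae] with t ht
    exact znorm_le θ ht.1 ht.2
  have hrep : μhat θ = ∫ t in Icc (0:ℝ) 1, zfun θ t ∂ν := by
    rw [hμhat θ, repr_lemma ν hone hint θ]
  have hIm : (μhat θ).im = ∫ t in Icc (0:ℝ) 1, (zfun θ t).im ∂ν := by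
    rw [hrep]; exact (integral_im hz_int).symm
  have hRe : (μhat θ).re = ∫ t in Icc (0:ℝ) 1, (zfun θ t).re ∂ν := by
    rw [hrep]; exact (integral_re hz_int).symm
  -- the function g and its properties
  set g : ℝ → ℝ := fun t => (1-t)⁻¹ - (zfun θ t).re with hgdef
  have hgint : IntegrableOn g (Icc 0 1) ν := hint.sub hz_int.re
  have h1Re : 1 - (μhat θ).re = ∫ t in Icc (0:ℝ) 1, g t ∂ν := by
    have hsub := integral_sub hint hz_int.re
    simp only [RCLike.re_to_complex] at hsub
    have heq2 : ∫ t in Icc (0:ℝ) 1, g t ∂ν = 1 - (μhat θ).re := by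
      rw [hgdef]
      simp only
      rw [hsub, hprob, ← hRe]
    exact heq2.symm
  have hgeq : ∀ᵐ t ∂(ν.restrict (Icc (0:ℝ) 1)),
      g t = t*(1+t)*(1-Real.cos θ)/((1-t)*Dfun θ t) := by
    filter_upwards [hae] with t ht
    rw [hgdef]; simp only
    rw [zre, identity θ ht.1 ht.2]
  have hgnonneg : ∀ᵐ t ∂(ν.restrict (Icc (0:ℝ) 1)), 0 ≤ g t := by
    filter_upwards [hgeq, hae] with t heq ht
    rw [heq]; exact gnonneg θ ht.1 ht.2
  have hposRe : 0 ≤ 1 - (μhat θ).re := by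
    rw [h1Re]; exact integral_nonneg_of_ae hgnonneg
  -- |Im| bounded by integral of F
  set F : ℝ → ℝ := fun t => t*|Real.sin θ|/Dfun θ t with hFdef
  have hFeq : ∀ᵐ t ∂(ν.restrict (Icc (0:ℝ) 1)), |(zfun θ t).im| = F t := by
    filter_upwards [hae] with t ht
    rw [zim, hFdef, abs_div, abs_mul, abs_of_nonneg ht.1,
      abs_of_pos (Dpos θ ht.1 ht.2)]
  have hF_int : IntegrableOn F (Icc 0 1) ν := (hz_int.im.abs).congr hFeq
  have habs : |(μhat θ).im| ≤ ∫ t in Icc (0:ℝ) 1, F t ∂ν := by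
    rw [hIm]
    refine le_trans ?_ (le_of_eq (integral_congr_ae hFeq))
    calc |∫ t in Icc (0:ℝ) 1, (zfun θ t).im ∂ν|
        = ‖∫ t in Icc (0:ℝ) 1, (zfun θ t).im ∂ν‖ := (Real.norm_eq_abs _).symm
    _ ≤ ∫ t in Icc (0:ℝ) 1, ‖(zfun θ t).im‖ ∂ν := norm_integral_le_integral_norm _
    _ = ∫ t in Icc (0:ℝ) 1, |(zfun θ t).im| ∂ν := by simp [Real.norm_eq_abs]
  rcases le_or_gt (1/2 : ℝ) |θ| with hbig | hsmall
  · -- large θ : pointwise comparison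
    have hmono : ∫ t in Icc (0:ℝ) 1, F t ∂ν ≤ ∫ t in Icc (0:ℝ) 1, 20 * g t ∂ν := by
      apply integral_mono_ae hF_int (hgint.const_mul 20)
      filter_upwards [hae, hgeq] with t ht heq
      rw [hFdef, heq]
      exact estE4 hbig hθabs ht.1 ht.2
    rw [integral_const_mul] at hmono
    calc |(μhat θ).im| ≤ 20 * ∫ t in Icc (0:ℝ) 1, g t ∂ν := le_trans habs hmono
    _ = 20 * (1 - (μhat θ).re) := by rw [h1Re]
    _ ≤ (20 + 10*(L+1)) * (1 - (μhat θ).re) := by nlinarith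
  · rcases eq_or_ne θ 0 with h0 | hne
    · -- θ = 0
      have : ∫ t in Icc (0:ℝ) 1, F t ∂ν = 0 := by
        rw [hFdef]; subst h0
        simp
      rw [this] at habs
      calc |(μhat θ).im| ≤ 0 := habs
      _ ≤ (20 + 10*(L+1)) * (1 - (μhat θ).re) := by nlinarith
    · -- small θ ≠ 0
      set x : ℝ := 1 - |θ| with hxdef
      have hθpos : 0 < |θ| := abs_pos.mpr hne
      have hx0 : 0 ≤ x := by rw [hxdef]; linarith
      have hx1 : x < 1 := by rw [hxdef]; linarith
      have hxhalf : 1/2 ≤ x := by rw [hxdef]; linarith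
      set A : ℝ := ∫ t in Icc x 1, t/(1-t) ∂ν with hAdef
      have haex : ∀ᵐ t ∂(ν.restrict (Icc x 1)), t ∈ Icc x 1 ∧ t < 1 := by
        have h1 : ∀ᵐ t ∂(ν.restrict (Icc x 1)), t ∈ Icc x 1 :=
          ae_restrict_mem measurableSet_Icc
        have h2 : ∀ᵐ t ∂(ν.restrict (Icc x 1)), t ≠ 1 := by
          refine ae_restrict_of_ae ?_
          rw [ae_iff]
          convert hone using 2
          ext t; simp
        filter_upwards [h1, h2] with t ht hne2
        exact ⟨ht, lt_of_le_of_ne ht.2 hne2⟩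
      have hA_int : IntegrableOn (fun t => t/(1-t)) (Icc x 1) ν := by
        apply Integrable.mono' (hint.mono_set (Icc_subset_Icc hx0 le_rfl))
          (measurable_id.div (measurable_const.sub measurable_id)).aestronglyMeasurable
        filter_upwards [haex] with t ht
        obtain ⟨⟨htx, ht1⟩, htlt⟩ := ht
        have h0t : 0 ≤ t := le_trans hx0 htx
        simp only [Pi.div_apply, Pi.sub_apply, id_eq, Real.norm_eq_abs]
        rw [abs_div, abs_of_nonneg h0t, abs_of_pos (by linarith : (0:ℝ) < 1 - t)]
        rw [div_le_iff₀ (by linarith), inv_mul_eq_div, le_div_iff₀ (by linarith)]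
        nlinarith
      have hA_nonneg : 0 ≤ A := by
        rw [hAdef]
        apply integral_nonneg_of_ae
        filter_upwards [haex] with t ht
        have h0t : 0 ≤ t := le_trans hx0 ht.1.1
        exact div_nonneg h0t (by linarith [ht.2])
      -- Part 1
      have hsub1 : Icc (0:ℝ) x ⊆ Icc 0 1 := Icc_subset_Icc le_rfl hx1.le
      have hcont : ContinuousOn (fun t : ℝ => |θ| * (t/(1-t)^2)) (Icc 0 x) := by
        apply ContinuousOn.mul continuousOn_const
        apply ContinuousOn.div continuousOn_id (by fun_prop)
        intro t ht
        exact ne_of_gt (pow_pos (by linarith [ht.2, hx1] : (0:ℝ) < 1 - t) 2)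
      have hQint : IntegrableOn (fun t : ℝ => |θ| * (t/(1-t)^2)) (Icc 0 x) ν :=
        hcont.integrableOn_compact isCompact_Icc
      have hpart1 : ∫ t in Icc (0:ℝ) x, F t ∂ν ≤ L * A := by
        have step1 : ∫ t in Icc (0:ℝ) x, F t ∂ν
            ≤ ∫ t in Icc (0:ℝ) x, |θ| * (t/(1-t)^2) ∂ν := by
          apply setIntegral_mono_on (hF_int.mono_set hsub1) hQint measurableSet_Icc
          intro t ht
          rw [hFdef]
          exact estE1 θ ht.1 ht.2 hx1
        have step2 := hcond x ⟨hx0, hx1⟩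
        rw [integral_const_mul] at step1
        have hstep3 : |θ| * ∫ t in Icc (0:ℝ) x, t/(1-t)^2 ∂ν ≤ |θ| * ((L/(1-x)) * A) := by
          apply mul_le_mul_of_nonneg_left _ (abs_nonneg θ)
          rw [hAdef]
          exact step2
        have hxeq : 1 - x = |θ| := by rw [hxdef]; ring
        rw [hxeq] at hstep3
        have hcollapse : |θ| * (L / |θ| * A) = L * A := by
          field_simp
        rw [hcollapse] at hstep3
        calc ∫ t in Icc (0:ℝ) x, F t ∂ν ≤ |θ| * ∫ t in Icc (0:ℝ) x, t/(1-t)^2 ∂ν := step1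
        _ ≤ L * A := hstep3
      -- Part 2
      have hsub2 : Ioc x (1:ℝ) ⊆ Icc x 1 := Ioc_subset_Icc_self
      have haex2 : ∀ᵐ t ∂(ν.restrict (Ioc x 1)), t ∈ Ioc x 1 ∧ t < 1 := by
        have h1 : ∀ᵐ t ∂(ν.restrict (Ioc x 1)), t ∈ Ioc x 1 :=
          ae_restrict_mem measurableSet_Ioc
        have h2 : ∀ᵐ t ∂(ν.restrict (Ioc x 1)), t ≠ 1 := by
          refine ae_restrict_of_ae ?_
          rw [ae_iff]
          convert hone using 2
          ext t; simp
        filter_upwards [h1, h2] with t ht hne2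
        exact ⟨ht, lt_of_le_of_ne ht.2 hne2⟩
      have hpart2 : ∫ t in Ioc x (1:ℝ), F t ∂ν ≤ A := by
        have step1 : ∫ t in Ioc x (1:ℝ), F t ∂ν ≤ ∫ t in Ioc x (1:ℝ), t/(1-t) ∂ν := by
          apply integral_mono_ae (hF_int.mono_set (hsub2.trans (Icc_subset_Icc hx0 le_rfl)))
            (hA_int.mono_set hsub2)
          filter_upwards [haex2] with t ht
          rw [hFdef]
          exact estE2 θ (le_trans hxhalf ht.1.1.le) ht.2
        have step2 : ∫ t in Ioc x (1:ℝ), t/(1-t) ∂ν ≤ A := by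
          rw [hAdef]
          apply setIntegral_mono_set hA_int
          · filter_upwards [haex] with t ht
            have h0t : 0 ≤ t := le_trans hx0 ht.1.1
            exact div_nonneg h0t (by linarith [ht.2])
          · exact HasSubset.Subset.eventuallyLE hsub2
        linarith
      -- combine upper bound
      have hsplit : ∫ t in Icc (0:ℝ) 1, F t ∂ν
          = (∫ t in Icc (0:ℝ) x, F t ∂ν) + ∫ t in Ioc x (1:ℝ), F t ∂ν := by
        rw [← setIntegral_union ((Iic_disjoint_Ioc le_rfl).mono Icc_subset_Iic_self le_rfl) measurableSet_Ioc
          (hF_int.mono_set hsub1) (hF_int.mono_set (hsub2.trans (Icc_subset_Icc hx0 le_rfl)))]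
        rw [Icc_union_Ioc_eq_Icc hx0 hx1.le]
      have hup : |(μhat θ).im| ≤ (L+1) * A := by
        rw [hsplit] at habs
        nlinarith
      -- lower bound for 1 - Re
      have hlow : A / 10 ≤ 1 - (μhat θ).re := by
        have hEint : IntegrableOn (fun t : ℝ => t/((1-t)*10)) (Icc x 1) ν := by
          simp_rw [← div_div]
          exact hA_int.div_const 10
        have step1 : ∫ t in Icc x (1:ℝ), (fun t : ℝ => t/((1-t)*10)) t ∂ν
            ≤ ∫ t in Icc x (1:ℝ), g t ∂ν := by
          apply integral_mono_ae hEint (hgint.mono_set (Icc_subset_Icc hx0 le_rfl))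
          have hgeqx : ∀ᵐ t ∂(ν.restrict (Icc x 1)),
              g t = t*(1+t)*(1-Real.cos θ)/((1-t)*Dfun θ t) := by
            filter_upwards [haex] with t ht
            rw [hgdef]
            simp only
            rw [zre, identity θ (le_trans hx0 ht.1.1) ht.2]
          filter_upwards [haex, hgeqx] with t ht heq
          rw [heq]
          have hθsmall : |θ| ≤ 1/2 := hsmall.le
          exact estE3 hθabs hθsmall (by rw [← hxdef]; exact ht.1.1) ht.2
        have step2 : ∫ t in Icc x (1:ℝ), g t ∂ν ≤ ∫ t in Icc (0:ℝ) 1, g t ∂ν := by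
          apply setIntegral_mono_set hgint hgnonneg
          exact HasSubset.Subset.eventuallyLE (Icc_subset_Icc hx0 le_rfl)
        have heval : ∫ t in Icc x (1:ℝ), (fun t : ℝ => t/((1-t)*10)) t ∂ν = A / 10 := by
          simp_rw [← div_div]
          rw [integral_div, hAdef]
        rw [h1Re]
        calc A / 10 = _ := heval.symm
        _ ≤ ∫ t in Icc x (1:ℝ), g t ∂ν := step1
        _ ≤ _ := step2
      calc |(μhat θ).im| ≤ (L+1) * A := hup
      _ ≤ (L+1) * (10 * (1 - (μhat θ).re)) := by nlinarith
      _ ≤ (20 + 10*(L+1)) * (1 - (μhat θ).re) := by nlinarith
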